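/- With the notation of the previous item, if moreover ρ̄_2 < (ρ̄_1 − 1)e^{ρ̄_1}, then ∂²φ̃/∂ρ_1²(ρ̄) < 0 and ∂²φ̃/∂ρ_2²(ρ̄) > 0, so ρ̄ is a saddle-type critical point of φ̃. -/

import Mathlib

/-- The energy function `φ̃` of the two-class network with `C = ∞`:
`φ̃(ρ₁,ρ₂) = −log(ρ₂ + e^{ρ₁}) + ρ₁ + ρ₂ − λ₁ log ρ₁ − λ₂ log ρ₂`. -/
noncomputable def phiT (l1 l2 : ℝ) (r1 r2 : ℝ) : ℝ :=
  -Real.log (r2 + Real.exp r1) + r1 + r2 - l1 * Real.log r1 - l2 * Real.log r2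

/-- If `ρ̄₂ < (ρ̄₁ − 1)e^{ρ̄₁}`, then `∂²φ̃/∂ρ₁²(ρ̄) < 0` and `∂²φ̃/∂ρ₂²(ρ̄) > 0`,
so `ρ̄` is a saddle-type critical point of `φ̃`. -/
theorem saddle_phiT (b1 b2 : ℝ) (hb1 : 1 < b1) (hb2 : 0 < b2)
    (hsaddle : b2 < (b1 - 1) * Real.exp b1)
    (l1 l2 : ℝ)
    (hl1 : l1 = b1 * b2 / (b2 + Real.exp b1))
    (hl2 : l2 = b2 * (b2 + Real.exp b1 - 1) / (b2 + Real.exp b1)) :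
    deriv (deriv (fun t : ℝ => phiT l1 l2 t b2)) b1 < 0 ∧
    0 < deriv (deriv (fun t : ℝ => phiT l1 l2 b1 t)) b2 := by
  have hE : (0:ℝ) < Real.exp b1 := Real.exp_pos b1
  have hS : (0:ℝ) < b2 + Real.exp b1 := by linarith
  have hb1p : (0:ℝ) < b1 := by linarith
  constructor
  · -- first coordinate
    set g1 : ℝ → ℝ := fun t => -(Real.exp t / (b2 + Real.exp t)) + 1 - l1 * t⁻¹ with hg1
    have key : ∀ t : ℝ, 0 < t → HasDerivAt (fun t : ℝ => phiT l1 l2 t b2) (g1 t) t := by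
      intro t ht
      have hSt : (0:ℝ) < b2 + Real.exp t := by positivity
      have h1 : HasDerivAt (fun t : ℝ => Real.log (b2 + Real.exp t))
          (Real.exp t / (b2 + Real.exp t)) t :=
        ((Real.hasDerivAt_exp t).const_add b2).log hSt.ne'
      have h2 : HasDerivAt (fun t : ℝ => Real.log t) t⁻¹ t := Real.hasDerivAt_log ht.ne'
      have := ((((h1.neg.add (hasDerivAt_id t)).add_const b2).sub
        (h2.const_mul l1)).sub_const (l2 * Real.log b2))
      unfold phiT
      exact this

    have he : deriv (fun t : ℝ => phiT l1 l2 t b2) =ᶠ[nhds b1] g1 := by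
      filter_upwards [eventually_gt_nhds hb1p] with t ht
      exact (key t ht).deriv
    rw [he.deriv_eq]
    have hq : HasDerivAt (fun t : ℝ => Real.exp t / (b2 + Real.exp t))
        ((Real.exp b1 * (b2 + Real.exp b1) - Real.exp b1 * Real.exp b1) /
          (b2 + Real.exp b1) ^ 2) b1 :=
      (Real.hasDerivAt_exp b1).div ((Real.hasDerivAt_exp b1).const_add b2) hS.ne'
    have hinv : HasDerivAt (fun t : ℝ => t⁻¹) (-(b1 ^ 2)⁻¹) b1 := hasDerivAt_inv hb1p.ne'
    have hg : HasDerivAt g1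
        (-((Real.exp b1 * (b2 + Real.exp b1) - Real.exp b1 * Real.exp b1) /
          (b2 + Real.exp b1) ^ 2) - l1 * -(b1 ^ 2)⁻¹) b1 :=
      (hq.neg.add_const 1).sub (hinv.const_mul l1)
    rw [hg.deriv]
    have hv : -((Real.exp b1 * (b2 + Real.exp b1) - Real.exp b1 * Real.exp b1) /
          (b2 + Real.exp b1) ^ 2) - l1 * -(b1 ^ 2)⁻¹
        = b2 * (b2 + Real.exp b1 - b1 * Real.exp b1) / (b1 * (b2 + Real.exp b1) ^ 2) := by
      rw [hl1]; field_simp; ring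
    rw [hv]
    apply div_neg_of_neg_of_pos
    · have : b2 + Real.exp b1 - b1 * Real.exp b1 < 0 := by nlinarith
      exact mul_neg_of_pos_of_neg hb2 this
    · positivity
  · -- second coordinate
    set E := Real.exp b1 with hEdef
    set g2 : ℝ → ℝ := fun t => -((t + E)⁻¹) + 1 - l2 * t⁻¹ with hg2
    have key : ∀ t : ℝ, 0 < t → HasDerivAt (fun t : ℝ => phiT l1 l2 b1 t) (g2 t) t := by
      intro t ht
      have hSt : (0:ℝ) < t + E := by positivity
      have h1 : HasDerivAt (fun t : ℝ => Real.log (t + E)) (1 / (t + E)) t :=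
        ((hasDerivAt_id t).add_const E).log hSt.ne'
      have h2 : HasDerivAt (fun t : ℝ => Real.log t) t⁻¹ t := Real.hasDerivAt_log ht.ne'
      have := (((h1.neg.add_const b1).add (hasDerivAt_id t)).sub_const
        (l1 * Real.log b1)).sub (h2.const_mul l2)
      unfold phiT
      rw [one_div] at this
      exact this

    have he : deriv (fun t : ℝ => phiT l1 l2 b1 t) =ᶠ[nhds b2] g2 := by
      filter_upwards [eventually_gt_nhds hb2] with t ht
      exact (key t ht).deriv
    rw [he.deriv_eq]
    have hinv1 : HasDerivAt (fun t : ℝ => (t + E)⁻¹) (-1 / (b2 + E) ^ 2) b2 :=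
      ((hasDerivAt_id b2).add_const E).inv hS.ne'
    have hinv2 : HasDerivAt (fun t : ℝ => t⁻¹) (-(b2 ^ 2)⁻¹) b2 := hasDerivAt_inv hb2.ne'
    have hg : HasDerivAt g2 (-(-1 / (b2 + E) ^ 2) - l2 * -(b2 ^ 2)⁻¹) b2 :=
      (hinv1.neg.add_const 1).sub (hinv2.const_mul l2)
    rw [hg.deriv]
    have hl2pos : 0 < l2 := by
      rw [hl2]
      apply div_pos _ hS
      have := Real.add_one_le_exp b1
      apply mul_pos hb2
      nlinarith
    have : -(-1 / (b2 + E) ^ 2) - l2 * -(b2 ^ 2)⁻¹ = 1 / (b2 + E) ^ 2 + l2 / b2 ^ 2 := by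
      ring
    rw [this]
    exact add_pos (by positivity) (div_pos hl2pos (by positivity))
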